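/- arXiv:2605.29781 — 2 statements merged into one kernel-verified Lean document; each statement's English description precedes it below -/
import Mathlib

section
/- Let λ ∈ ℕ and A ∈ ℕ with A ≥ 1 and 8A < λ. Define g : ℤ/λℤ → ℂ by g(q) = 1 if q is the residue class of some integer k with |k| ≤ A, and g(q) = 0 otherwise. Then: (i) ∑_{q∈ℤ/λℤ} |g(q)|² = 2A+1; (ii) ∑_{(a,b)∈ℤ²} |V_g g(ā, b̄)|² · e^{−π(a²+b²)/λ} ≥ e^{−πA²/λ} · e^{−πλ/A²} · (2A/π)² · (λ + 2A + 1), where ā, b̄ denote the residues of a, b in ℤ/λℤ. (Note e^{−π(a²+b²)/λ} = |𝓛₀(π(a²+b²)/λ)|² with 𝓛₀(v) = e^{−v/2}.) -/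
set_option maxHeartbeats 1000000

open Real Complex
open scoped ComplexConjugate Classical


/-- The discrete short-time Fourier transform on `ℤ/λℤ`:
`V_γη(a,b) = ∑_{q∈ℤ/λℤ} η(q) conj(γ(q-a)) e^{-2πibq/λ}`. -/
noncomputable def Vdstft (lam : ℕ) (γ η : ZMod lam → ℂ) (a b : ZMod lam) : ℂ :=
  ∑' q : ZMod lam, η q * conj (γ (q - a)) *
    Complex.exp (-(2 * (π : ℂ) * Complex.I * (b.val : ℂ) * (q.val : ℂ)) / (lam : ℂ))

noncomputable def gA (lam A : ℕ) : ZMod lam → ℂ :=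
  fun q => if ∃ k : ℤ, |k| ≤ (A : ℤ) ∧ (k : ZMod lam) = q then (1 : ℂ) else 0

lemma norm_exp_mul_I_sub_one (t : ℝ) :
    ‖Complex.exp ((t:ℂ) * Complex.I) - 1‖ = 2 * |Real.sin (t / 2)| := by
  have e1 : Complex.exp ((t:ℂ) * I) = Complex.exp ((t/2:ℂ)*I) * Complex.exp ((t/2:ℂ)*I) := by
    rw [← Complex.exp_add]; ring_nf
  have e2 : Complex.exp ((t/2:ℂ)*I) * Complex.exp (-((t/2:ℂ))*I) = 1 := by
    rw [← Complex.exp_add]; ring_nf; exact Complex.exp_zero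
  have h1 : Complex.exp ((t:ℂ) * Complex.I) - 1
      = Complex.exp ((t/2:ℂ) * Complex.I) * (2 * Complex.I * Complex.sin ((t/2 : ℝ) : ℂ)) := by
    rw [Complex.sin]; push_cast
    linear_combination e1 + e2 + (Complex.exp ((t/2:ℂ)*I)^2
      - Complex.exp ((t/2:ℂ)*I) * Complex.exp (-((t/2:ℂ))*I)) * Complex.I_sq
  have h2 : ‖Complex.exp ((t/2:ℂ) * Complex.I)‖ = 1 := by
    rw [show ((t/2:ℂ)) = ((t/2 : ℝ) : ℂ) by push_cast; ring]
    exact Complex.norm_exp_ofReal_mul_I _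
  have h3 : Complex.sin ((t/2 : ℝ) : ℂ) = ((Real.sin (t/2) : ℝ) : ℂ) := (Complex.ofReal_sin _).symm
  rw [h1, norm_mul, h2, one_mul, h3]
  simp only [norm_mul, Complex.norm_real, Real.norm_eq_abs, Complex.norm_I, Complex.norm_two]
  ring

lemma geom_norm_ge (L : ℕ) (hL : 1 ≤ L) (θ : ℝ) (hθ : |θ| * L ≤ π) :
    2 * L / π ≤ ‖∑ j ∈ Finset.range L, Complex.exp ((θ:ℂ) * Complex.I) ^ j‖ := by
  have hπ := Real.pi_pos
  have hL1 : (1:ℝ) ≤ L := by exact_mod_cast hL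
  by_cases hθ0 : θ = 0
  · subst hθ0
    simp only [Complex.ofReal_zero, zero_mul, Complex.exp_zero, one_pow, Finset.sum_const,
      Finset.card_range, nsmul_eq_mul, mul_one, Complex.norm_natCast]
    rw [div_le_iff₀ hπ]
    nlinarith [Real.two_le_pi]
  · have hθa : 0 < |θ| := abs_pos.mpr hθ0
    have hz : Complex.exp ((θ:ℂ) * Complex.I) ≠ 1 := by
      intro h
      rw [Complex.exp_eq_one_iff] at h
      obtain ⟨n, hn⟩ := h
      have hI : ((θ:ℂ)) = n * (2 * π) := by
        have h2 : (θ:ℂ) * I = ((n:ℂ) * (2 * π)) * I := by linear_combination hn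
        exact mul_right_cancel₀ Complex.I_ne_zero h2
      have hR : θ = n * (2 * π) := by exact_mod_cast hI
      have hn0 : n ≠ 0 := by rintro rfl; simp at hR; exact hθ0 hR
      have h1 : (1:ℝ) ≤ |(n:ℝ)| := by exact_mod_cast Int.one_le_abs hn0
      have habs : |θ| = |(n:ℝ)| * (2*π) := by
        rw [hR, abs_mul, abs_of_pos (show (0:ℝ) < 2*π by linarith)]
      nlinarith [abs_nonneg θ]
    rw [geom_sum_eq hz, norm_div]
    have hzL : Complex.exp ((θ:ℂ) * Complex.I) ^ L = Complex.exp (((L * θ : ℝ) : ℂ) * Complex.I) := by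
      rw [← Complex.exp_nat_mul]; push_cast; ring_nf
    rw [hzL, norm_exp_mul_I_sub_one, norm_exp_mul_I_sub_one]
    have hb1 : |Real.sin (θ/2)| ≤ |θ|/2 := by
      calc |Real.sin (θ/2)| ≤ |θ/2| := Real.abs_sin_le_abs
        _ = |θ|/2 := by rw [abs_div]; norm_num
    have hb0 : 0 < |Real.sin (θ/2)| := by
      rw [abs_pos]
      intro h
      rcases Real.sin_eq_zero_iff.mp h with ⟨n, hn⟩
      have hR : θ = (n:ℝ) * (2*π) := by linarith
      have hn0 : n ≠ 0 := by rintro rfl; simp at hR; exact hθ0 hR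
      have h1 : (1:ℝ) ≤ |(n:ℝ)| := by exact_mod_cast Int.one_le_abs hn0
      have habs : |θ| = |(n:ℝ)| * (2*π) := by
        rw [hR, abs_mul, abs_of_pos (show (0:ℝ) < 2*π by linarith)]
      nlinarith [abs_nonneg θ]
    have ha : 2/π * (L * |θ| / 2) ≤ |Real.sin (L*θ/2)| := by
      have := Real.mul_abs_le_abs_sin (x := (L:ℝ)*θ/2) ?_
      · rwa [show |(L:ℝ)*θ/2| = L * |θ| / 2 by rw [abs_div, abs_mul, Nat.abs_cast]; norm_num] at this
      · rw [show |(L:ℝ)*θ/2| = L * |θ| / 2 by rw [abs_div, abs_mul, Nat.abs_cast]; norm_num]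
        rw [div_le_div_iff₀ (by norm_num) (by norm_num : (0:ℝ) < 2)]
        nlinarith
    calc 2 * L / π = (2 * (2/π * (L * |θ| / 2))) / (2 * (|θ|/2)) := by
          field_simp
      _ ≤ (2 * |Real.sin (L*θ/2)|) / (2 * |Real.sin (θ/2)|) := by
          apply div_le_div₀ (by positivity) (by linarith) (by linarith) (by linarith)

lemma exp_congr_mod (lam : ℕ) (hl : lam ≠ 0) (m n : ℤ) (h : (lam:ℤ) ∣ (m - n)) :
    Complex.exp ((m:ℂ) * (-(2*(π:ℂ)*Complex.I)) / (lam:ℂ))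
      = Complex.exp ((n:ℂ) * (-(2*(π:ℂ)*Complex.I)) / (lam:ℂ)) := by
  obtain ⟨t, ht⟩ := h
  have hm : (m:ℂ) = (n:ℂ) + (lam:ℂ) * (t:ℂ) := by
    have : m = n + (lam:ℤ) * t := by omega
    exact_mod_cast congrArg (Int.cast : ℤ → ℂ) this
  have hlam : (lam:ℂ) ≠ 0 := Nat.cast_ne_zero.mpr hl
  rw [hm, show ((n:ℂ) + (lam:ℂ)*(t:ℂ)) * (-(2*(π:ℂ)*Complex.I))/(lam:ℂ)
      = (n:ℂ)*(-(2*(π:ℂ)*Complex.I))/(lam:ℂ) + (((-t : ℤ)):ℂ) * (2*(π:ℂ)*Complex.I) by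
    push_cast; field_simp; ring]
  rw [Complex.exp_add, Complex.exp_int_mul_two_pi_mul_I, mul_one]

lemma E_eq (lam : ℕ) [NeZero lam] (b k : ℤ) :
    Complex.exp (-(2 * (π:ℂ) * Complex.I * (((b : ZMod lam)).val : ℂ) * (((k : ZMod lam)).val : ℂ)) / (lam:ℂ))
      = Complex.exp (((-(2*π*b*k/lam) : ℝ) : ℂ) * Complex.I) := by
  have hl : lam ≠ 0 := NeZero.ne lam
  set vb : ℤ := ((b : ZMod lam).val : ℤ) with hvb
  set vk : ℤ := ((k : ZMod lam).val : ℤ) with hvk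
  have h1 : vb % (lam:ℤ) = b % lam := by
    rw [hvb, ZMod.val_intCast]; exact Int.emod_emod_of_dvd b dvd_rfl
  have h2 : vk % (lam:ℤ) = k % lam := by
    rw [hvk, ZMod.val_intCast]; exact Int.emod_emod_of_dvd k dvd_rfl
  have hdvd : (lam:ℤ) ∣ (vb * vk - b * k) := ((Int.ModEq.mul h1 h2).symm).dvd
  have e1 : (-(2 * (π:ℂ) * Complex.I * (((b : ZMod lam)).val : ℂ) * (((k : ZMod lam)).val : ℂ)) / (lam:ℂ))
      = ((vb*vk : ℤ):ℂ) * (-(2*(π:ℂ)*Complex.I)) / (lam:ℂ) := by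
    push_cast [hvb, hvk]; ring
  have e2 : (((-(2*π*b*k/lam) : ℝ) : ℂ) * Complex.I)
      = ((b*k : ℤ):ℂ) * (-(2*(π:ℂ)*Complex.I)) / (lam:ℂ) := by
    push_cast; ring
  rw [e1, e2]
  exact exp_congr_mod lam hl _ _ (by rwa [show vb*vk - b*k = (vb*vk) - (b*k) by ring])

lemma Vdstft_norm_eq (lam A : ℕ) (hA : 1 ≤ A) (h8 : 8*A < lam) (a b : ℤ) (ha : |a| ≤ (A:ℤ)) :
    ‖Vdstft lam (gA lam A) (gA lam A) (a : ZMod lam) (b : ZMod lam)‖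
      = ‖∑ j ∈ Finset.range (2*A+1 - a.natAbs),
          Complex.exp (((-(2*π*b/lam) : ℝ) : ℂ) * Complex.I) ^ j‖ := by
  haveI : NeZero lam := ⟨by omega⟩
  have habs := Int.abs_eq_natAbs a
  set k₀ : ℤ := max (-(A:ℤ)) (a - A) with hk₀
  set k₁ : ℤ := min (A:ℤ) (a + A) with hk₁
  set L : ℕ := 2*A+1 - a.natAbs with hLdef
  set K : Finset ℤ := Finset.Icc k₀ k₁ with hK
  have hzero : ∀ x : ℤ, |x| ≤ 3*(A:ℤ) → ((x : ZMod lam) = 0 ↔ x = 0) := by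
    intro x hx
    constructor
    · intro h
      refine Int.eq_zero_of_abs_lt_dvd ((ZMod.intCast_zmod_eq_zero_iff_dvd _ _).mp h) ?_
      have := Int.abs_eq_natAbs x
      omega
    · rintro rfl; simp
  have hiff : ∀ q : ZMod lam, ((∃ k : ℤ, |k| ≤ (A:ℤ) ∧ (k : ZMod lam) = q) ∧
      (∃ m : ℤ, |m| ≤ (A:ℤ) ∧ (m : ZMod lam) = q - (a : ZMod lam)))
      ↔ q ∈ K.image (fun k : ℤ => (k : ZMod lam)) := by
    intro q
    constructor
    · rintro ⟨⟨k, hk, rfl⟩, ⟨m, hm, hmq⟩⟩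
      have hcast : ((k - a - m : ℤ) : ZMod lam) = 0 := by
        push_cast
        rw [hmq]; ring
      have hkm : k - a - m = 0 := by
        refine (hzero _ ?_).mp hcast
        have h1 := Int.abs_eq_natAbs k
        have h2 := Int.abs_eq_natAbs m
        have h3 := Int.abs_eq_natAbs (k - a - m)
        omega
      refine Finset.mem_image.mpr ⟨k, Finset.mem_Icc.mpr ?_, rfl⟩
      have h1 := Int.abs_eq_natAbs k
      have h2 := Int.abs_eq_natAbs m
      omega
    · intro hq
      obtain ⟨k, hk, rfl⟩ := Finset.mem_image.mp hq
      rw [hK, Finset.mem_Icc] at hk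
      have h1 := Int.abs_eq_natAbs k
      have h2 := Int.abs_eq_natAbs (k - a)
      refine ⟨⟨k, by omega, rfl⟩, ⟨k - a, by omega, by push_cast; ring⟩⟩
  rw [Vdstft, tsum_fintype]
  have hind : ∀ q : ZMod lam, gA lam A q * conj (gA lam A (q - (a : ZMod lam)))
      = if q ∈ K.image (fun k : ℤ => (k : ZMod lam)) then 1 else 0 := by
    intro q
    by_cases h : q ∈ K.image (fun k : ℤ => (k : ZMod lam))
    · obtain ⟨h1, h2⟩ := (hiff q).mpr h
      simp only [gA, if_pos h1, if_pos h2, if_pos h, map_one, mul_one]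
    · rw [if_neg h]
      by_cases h1 : ∃ k : ℤ, |k| ≤ (A:ℤ) ∧ (k : ZMod lam) = q
      · have h2 : ¬ ∃ m : ℤ, |m| ≤ (A:ℤ) ∧ (m : ZMod lam) = q - (a : ZMod lam) :=
          fun h2 => h ((hiff q).mp ⟨h1, h2⟩)
        simp only [gA, if_pos h1, if_neg h2, map_zero, mul_zero]
      · simp only [gA, if_neg h1, zero_mul]
  calc ‖∑ q : ZMod lam, gA lam A q * conj (gA lam A (q - (a:ZMod lam))) *
        Complex.exp (-(2 * (π:ℂ) * Complex.I * (((b:ZMod lam)).val : ℂ) * ((q.val : ℕ) : ℂ)) / (lam:ℂ))‖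
      = ‖∑ k ∈ K, Complex.exp (((-(2*π*b*k/lam) : ℝ) : ℂ) * Complex.I)‖ := by
        congr 1
        rw [show (∑ q : ZMod lam, gA lam A q * conj (gA lam A (q - (a:ZMod lam))) *
            Complex.exp (-(2 * (π:ℂ) * Complex.I * (((b:ZMod lam)).val : ℂ) * ((q.val : ℕ) : ℂ)) / (lam:ℂ)))
          = ∑ q : ZMod lam, (if q ∈ K.image (fun k : ℤ => (k : ZMod lam)) then
              Complex.exp (-(2 * (π:ℂ) * Complex.I * (((b:ZMod lam)).val : ℂ) * ((q.val : ℕ) : ℂ)) / (lam:ℂ)) else 0) from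
          Finset.sum_congr rfl fun q _ => by rw [hind q, ite_mul, one_mul, zero_mul]]
        rw [Finset.sum_ite_mem, Finset.univ_inter]
        rw [Finset.sum_image (by
          intro x hx y hy hxy
          simp only [Finset.mem_coe, hK, Finset.mem_Icc] at hx hy
          have hcast : ((x - y : ℤ) : ZMod lam) = 0 := by push_cast; rw [show (x : ZMod lam) = (y : ZMod lam) from hxy]; ring
          have := (hzero (x - y) (by
            have h1 := Int.abs_eq_natAbs (x - y)
            omega)).mp hcast
          omega)]
        refine Finset.sum_congr rfl fun k hk => ?_
        exact E_eq lam b k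
      _ = ‖∑ j ∈ Finset.range L, Complex.exp (((-(2*π*b*(k₀+j)/lam) : ℝ) : ℂ) * Complex.I)‖ := by
        congr 1
        refine Finset.sum_nbij' (fun k => (k - k₀).toNat) (fun j => k₀ + j) ?_ ?_ ?_ ?_ ?_
        · intro x hx
          rw [hK, Finset.mem_Icc] at hx
          beta_reduce
          rw [Finset.mem_range]
          omega
        · intro j hj
          rw [Finset.mem_range] at hj
          beta_reduce
          rw [hK, Finset.mem_Icc]
          omega
        · intro x hx
          rw [hK, Finset.mem_Icc] at hx
          beta_reduce
          omega
        · intro j hj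
          rw [Finset.mem_range] at hj
          beta_reduce
          omega
        · intro x hx
          rw [hK, Finset.mem_Icc] at hx
          beta_reduce
          have htn : (((x - k₀).toNat : ℤ)) = x - k₀ := Int.toNat_of_nonneg (by omega)
          have htn' : (((x - k₀).toNat : ℕ) : ℝ) = (x:ℝ) - (k₀:ℝ) := by
            exact_mod_cast congrArg (Int.cast : ℤ → ℝ) htn
          congr 3
          rw [htn']
          ring
      _ = ‖Complex.exp (((-(2*π*b*k₀/lam) : ℝ) : ℂ) * Complex.I) *
            ∑ j ∈ Finset.range L, Complex.exp (((-(2*π*b/lam) : ℝ) : ℂ) * Complex.I) ^ j‖ := by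
        rw [Finset.mul_sum]
        congr 1
        refine Finset.sum_congr rfl fun j _ => ?_
        rw [← Complex.exp_nat_mul, ← Complex.exp_add]
        congr 1
        push_cast
        have hlam : ((lam:ℂ)) ≠ 0 := Nat.cast_ne_zero.mpr (by omega)
        field_simp
        ring
      _ = ‖∑ j ∈ Finset.range L, Complex.exp (((-(2*π*b/lam) : ℝ) : ℂ) * Complex.I) ^ j‖ := by
        rw [norm_mul, Complex.norm_exp_ofReal_mul_I, one_mul]

lemma Vdstft_norm_lower (lam A : ℕ) (hA : 1 ≤ A) (h8 : 8*A < lam) (a b : ℤ)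
    (ha : |a| ≤ (A:ℤ)) (hb : 2 * |b| * (2*(A:ℤ)+1) ≤ (lam:ℤ)) :
    2*((2*A+1 - a.natAbs : ℕ):ℝ)/π
      ≤ ‖Vdstft lam (gA lam A) (gA lam A) (a:ZMod lam) (b:ZMod lam)‖ := by
  rw [Vdstft_norm_eq lam A hA h8 a b ha]
  have habs := Int.abs_eq_natAbs a
  have hL : 1 ≤ 2*A+1 - a.natAbs := by omega
  refine geom_norm_ge _ hL _ ?_
  have hπ := Real.pi_pos
  have hlam : (0:ℝ) < lam := by exact_mod_cast (by omega : 0 < lam)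
  have habsθ : |(-(2*π*b/lam) : ℝ)| = 2 * π * |(b:ℝ)| / lam := by
    rw [abs_neg, abs_div, abs_mul, abs_mul, abs_of_pos hπ, Nat.abs_cast,
      (by norm_num : |(2:ℝ)| = 2)]
  rw [habsθ]
  have hbR : 2 * |(b:ℝ)| * (2*(A:ℝ)+1) ≤ (lam:ℝ) := by exact_mod_cast hb
  have hLle : ((2*A+1 - a.natAbs : ℕ):ℝ) ≤ 2*(A:ℝ)+1 := by
    calc ((2*A+1 - a.natAbs : ℕ):ℝ) ≤ ((2*A+1 : ℕ):ℝ) := Nat.cast_le.mpr (by omega)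
      _ = 2*(A:ℝ)+1 := by push_cast; ring
  rw [div_mul_eq_mul_div, div_le_iff₀ hlam]
  have hb0 : (0:ℝ) ≤ 2 * |(b:ℝ)| := by positivity
  nlinarith [mul_le_mul_of_nonneg_left hLle hb0, hbR, hπ, abs_nonneg (b:ℝ),
    Nat.cast_nonneg (α := ℝ) (2*A+1 - a.natAbs)]

lemma sum_abs_Icc (A : ℕ) : ∑ a ∈ Finset.Icc (-(A:ℤ)) A, |a| = A*(A+1) := by
  induction A with
  | zero => simp
  | succ A ih =>
    have hset : Finset.Icc (-((A:ℤ)+1)) ((A:ℤ)+1)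
        = insert (-((A:ℤ)+1)) (insert ((A:ℤ)+1) (Finset.Icc (-(A:ℤ)) A)) := by
      ext x; simp only [Finset.mem_Icc, Finset.mem_insert]; omega
    push_cast
    rw [hset, Finset.sum_insert (by simp only [Finset.mem_insert, Finset.mem_Icc]; omega),
      Finset.sum_insert (by simp only [Finset.mem_Icc]; omega), ih]
    rw [_root_.abs_of_nonpos (by omega : (-((A:ℤ)+1)) ≤ 0),
      _root_.abs_of_nonneg (by omega : (0:ℤ) ≤ (A:ℤ)+1)]
    ring

lemma sum_L_sq (A : ℕ) (hA : 1 ≤ A) :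
    ((2*A+1 : ℤ)) * (2*A^2+2*A+1) ≤ ∑ a ∈ Finset.Icc (-(A:ℤ)) A, ((2*A+1 : ℤ) - |a|)^2 := by
  have hcard : (Finset.Icc (-(A:ℤ)) A).card = 2*A+1 := by
    rw [Int.card_Icc]; omega
  have hpt : ∀ a ∈ Finset.Icc (-(A:ℤ)) A,
      ((2*A+1:ℤ))^2 - 2*(2*A+1)*|a| ≤ ((2*A+1:ℤ) - |a|)^2 := by
    intro a _; nlinarith [sq_nonneg |a|]
  have hs := Finset.sum_le_sum hpt
  rw [Finset.sum_sub_distrib, Finset.sum_const, hcard, ← Finset.mul_sum, sum_abs_Icc] at hs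
  refine le_trans ?_ hs
  push_cast
  ring_nf
  nlinarith [sq_nonneg ((A:ℤ))]

lemma part_one (lam A : ℕ) (hA : 1 ≤ A) (h8 : 8 * A < lam) :
    (∑' q : ZMod lam, ‖gA lam A q‖ ^ 2) = 2 * (A : ℝ) + 1 := by
  haveI : NeZero lam := ⟨by omega⟩
  rw [tsum_fintype]
  have h1 : ∀ q : ZMod lam, ‖gA lam A q‖^2 = if ∃ k : ℤ, |k| ≤ (A : ℤ) ∧ (k : ZMod lam) = q then (1:ℝ) else 0 := by
    intro q
    rw [gA]
    split_ifs <;> simp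
  rw [Finset.sum_congr rfl fun q _ => h1 q, Finset.sum_boole]
  have hfil : (Finset.univ.filter (fun q : ZMod lam => ∃ k : ℤ, |k| ≤ (A:ℤ) ∧ (k:ZMod lam) = q))
      = (Finset.Icc (-(A:ℤ)) A).image (fun k : ℤ => (k : ZMod lam)) := by
    ext q
    simp only [Finset.mem_filter, Finset.mem_univ, true_and, Finset.mem_image, Finset.mem_Icc]
    constructor
    · rintro ⟨k, hk, rfl⟩
      exact ⟨k, by rw [abs_le] at hk; exact hk, rfl⟩
    · rintro ⟨k, hk, rfl⟩
      exact ⟨k, abs_le.mpr hk, rfl⟩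
  rw [hfil, Finset.card_image_of_injOn (by
    intro x hx y hy hxy
    rw [Finset.mem_coe, Finset.mem_Icc] at hx hy
    have hxy' : (x : ZMod lam) = (y : ZMod lam) := hxy
    have hd := (ZMod.intCast_eq_intCast_iff_dvd_sub x y lam).mp hxy'
    have h0 : x - y = 0 := by
      refine Int.eq_zero_of_abs_lt_dvd (by simpa using (dvd_neg.mpr hd)) ?_
      have := Int.abs_eq_natAbs (x - y)
      omega
    omega)]
  rw [Int.card_Icc]
  have : ((A:ℤ) + 1 - -(A:ℤ)).toNat = 2*A+1 := by omega
  rw [this]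
  push_cast
  ring

lemma summable_gauss (c : ℝ) (hc : 0 < c) : Summable (fun n : ℤ => Real.exp (-c * (n:ℝ)^2)) := by
  have key : Summable (fun n : ℕ => Real.exp (-c * (n:ℝ)^2)) := by
    refine Summable.of_nonneg_of_le (fun n => (Real.exp_pos _).le) (fun n => ?_)
      (summable_geometric_of_lt_one (Real.exp_pos (-c)).le (Real.exp_lt_one_iff.mpr (by linarith)))
    rw [← Real.exp_nat_mul]
    apply Real.exp_le_exp.mpr
    have hn : n = 0 ∨ 1 ≤ n := by omega
    have : (n:ℝ) ≤ (n:ℝ)^2 := by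
      rcases hn with h | h
      · subst h; norm_num
      · have : (1:ℝ) ≤ (n:ℝ) := by exact_mod_cast h
        nlinarith
    nlinarith
  apply Summable.of_nat_of_neg <;> simpa using key

lemma Vdstft_norm_le (lam A : ℕ) (hl : lam ≠ 0) (a b : ZMod lam) :
    ‖Vdstft lam (gA lam A) (gA lam A) a b‖ ≤ lam := by
  haveI : NeZero lam := ⟨hl⟩
  rw [Vdstft, tsum_fintype]
  refine le_trans (norm_sum_le _ _) ?_
  have hbd : ∀ q : ZMod lam, ‖gA lam A q * conj (gA lam A (q - a)) *
      Complex.exp (-(2 * (π : ℂ) * Complex.I * (b.val : ℂ) * (q.val : ℂ)) / (lam : ℂ))‖ ≤ 1 := by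
    intro q
    rw [norm_mul, norm_mul]
    have h1 : ‖gA lam A q‖ ≤ 1 := by rw [gA]; split_ifs <;> simp
    have h2 : ‖conj (gA lam A (q - a))‖ ≤ 1 := by
      rw [RCLike.norm_conj]; rw [gA]; split_ifs <;> simp
    have h3 : ‖Complex.exp (-(2 * (π : ℂ) * Complex.I * (b.val : ℂ) * (q.val : ℂ)) / (lam : ℂ))‖ = 1 := by
      rw [show (-(2 * (π : ℂ) * Complex.I * (b.val : ℂ) * (q.val : ℂ)) / (lam : ℂ))
          = ((-(2 * π * (b.val:ℝ) * (q.val:ℝ) / (lam:ℝ)) : ℝ) : ℂ) * Complex.I by push_cast; ring]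
      exact Complex.norm_exp_ofReal_mul_I _
    calc ‖gA lam A q‖ * ‖conj (gA lam A (q - a))‖ * ‖_‖ ≤ 1 * 1 * 1 := by
          exact mul_le_mul (mul_le_mul h1 h2 (norm_nonneg _) (by linarith)) (le_of_eq h3)
            (norm_nonneg _) (by norm_num)
      _ = 1 := by norm_num
  refine le_trans (Finset.sum_le_sum fun q _ => hbd q) ?_
  rw [Finset.sum_const, Finset.card_univ, ZMod.card, nsmul_eq_mul, mul_one]


lemma weight_lower (lam A M : ℕ) (hA : 1 ≤ A) (h8 : 8*A < lam) (hM4 : 4*A*M ≤ lam)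
    (a b : ℤ) (ha : |a| ≤ (A:ℤ)) (hb : |b| ≤ (M:ℤ)) :
    Real.exp (-π * (A:ℝ)^2/(lam:ℝ)) * Real.exp (-π*(lam:ℝ)/(A:ℝ)^2)
      ≤ Real.exp (-π * ((a:ℝ)^2 + (b:ℝ)^2)/(lam:ℝ)) := by
  rw [← Real.exp_add]
  apply Real.exp_le_exp.mpr
  have hlam : (0:ℝ) < lam := by exact_mod_cast (by omega : 0 < lam)
  have hA2 : (0:ℝ) < (A:ℝ)^2 := by
    have : (0:ℝ) < (A:ℝ) := by exact_mod_cast hA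
    positivity
  have haR : (a:ℝ)^2 ≤ (A:ℝ)^2 := by
    have h1 : ((a:ℝ))^2 = |(a:ℝ)|^2 := (_root_.sq_abs _).symm
    have h2 : |(a:ℝ)| ≤ (A:ℝ) := by exact_mod_cast ha
    nlinarith [abs_nonneg (a:ℝ)]
  have hbR : (b:ℝ)^2 ≤ (M:ℝ)^2 := by
    have h1 : ((b:ℝ))^2 = |(b:ℝ)|^2 := (_root_.sq_abs _).symm
    have h2 : |(b:ℝ)| ≤ (M:ℝ) := by exact_mod_cast hb
    nlinarith [abs_nonneg (b:ℝ)]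
  have hM4R : 4*(A:ℝ)*(M:ℝ) ≤ (lam:ℝ) := by exact_mod_cast hM4
  have hMnn : (0:ℝ) ≤ (M:ℝ) := Nat.cast_nonneg M
  have hAnn : (1:ℝ) ≤ (A:ℝ) := by exact_mod_cast hA
  have hkey : ((a:ℝ)^2 + (b:ℝ)^2)/(lam:ℝ) ≤ (A:ℝ)^2/(lam:ℝ) + (lam:ℝ)/(A:ℝ)^2 := by
    rw [div_add_div _ _ hlam.ne' hA2.ne', div_le_div_iff₀ hlam (by positivity)]
    have h16 : 16*(A:ℝ)^2*(M:ℝ)^2 ≤ (lam:ℝ)^2 := by nlinarith [mul_self_le_mul_self (by positivity : (0:ℝ) ≤ 4*(A:ℝ)*(M:ℝ)) hM4R]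
    have hbb : (b:ℝ)^2*(A:ℝ)^2 ≤ (lam:ℝ)^2 := by
      nlinarith [hbR, sq_nonneg (b:ℝ), hA2.le, hMnn, h16,
        mul_le_mul_of_nonneg_right hbR hA2.le]
    nlinarith [mul_le_mul_of_nonneg_right haR (mul_pos hlam hA2).le,
      mul_le_mul_of_nonneg_right hbb hlam.le]
  calc -π * (A:ℝ)^2/(lam:ℝ) + -π*(lam:ℝ)/(A:ℝ)^2
      = -(π * ((A:ℝ)^2/(lam:ℝ) + (lam:ℝ)/(A:ℝ)^2)) := by ring
    _ ≤ -(π * (((a:ℝ)^2 + (b:ℝ)^2)/(lam:ℝ))) := by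
        exact neg_le_neg (mul_le_mul_of_nonneg_left hkey Real.pi_pos.le)
    _ = -π * ((a:ℝ)^2 + (b:ℝ)^2)/(lam:ℝ) := by ring

lemma part_two (lam A : ℕ) (hA : 1 ≤ A) (h8 : 8 * A < lam) :
    Real.exp (-π * (A : ℝ) ^ 2 / (lam : ℝ)) * Real.exp (-π * (lam : ℝ) / (A : ℝ) ^ 2) *
        (2 * (A : ℝ) / π) ^ 2 * ((lam : ℝ) + 2 * (A : ℝ) + 1)
      ≤ ∑' ab : ℤ × ℤ,
          ‖Vdstft lam (gA lam A) (gA lam A) ((ab.1 : ZMod lam)) ((ab.2 : ZMod lam))‖ ^ 2 *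
            Real.exp (-π * ((ab.1 : ℝ) ^ 2 + (ab.2 : ℝ) ^ 2) / (lam : ℝ)) := by
  haveI : NeZero lam := ⟨by omega⟩
  have hπ := Real.pi_pos
  have hlamR : (0:ℝ) < lam := by exact_mod_cast (by omega : 0 < lam)
  set M : ℕ := lam / (2*(2*A+1)) with hMdef
  have hdm : 2*(2*A+1)*M + lam % (2*(2*A+1)) = lam := by rw [hMdef]; exact Nat.div_add_mod lam _
  have hmodlt : lam % (2*(2*A+1)) < 2*(2*A+1) := Nat.mod_lt lam (by omega)
  have hM1 : 2*(2*A+1)*M ≤ lam := Nat.le.intro hdm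
  have hM2 : lam < 2*(2*A+1)*(M+1) := by
    calc lam = 2*(2*A+1)*M + lam % (2*(2*A+1)) := hdm.symm
      _ < 2*(2*A+1)*M + 2*(2*A+1) := Nat.add_lt_add_left hmodlt _
      _ = 2*(2*A+1)*(M+1) := by ring
  have hM4 : 4*A*M ≤ lam := le_trans (Nat.mul_le_mul_right M (by omega)) hM1
  set w : ℝ := Real.exp (-π * (A:ℝ)^2/(lam:ℝ)) * Real.exp (-π*(lam:ℝ)/(A:ℝ)^2) with hw
  have hwpos : 0 < w := by rw [hw]; positivity
  -- summability
  have hg1 : Summable (fun n : ℤ => Real.exp (-π*(n:ℝ)^2/(lam:ℝ))) := by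
    refine (summable_gauss (π/lam) (by positivity)).congr (fun n => ?_)
    congr 1; ring
  have hprod : Summable (fun ab : ℤ×ℤ =>
      Real.exp (-π*(ab.1:ℝ)^2/(lam:ℝ)) * Real.exp (-π*(ab.2:ℝ)^2/(lam:ℝ))) :=
    hg1.mul_of_nonneg hg1 (fun n => (Real.exp_pos _).le) (fun n => (Real.exp_pos _).le)
  have hsummable : Summable (fun ab : ℤ×ℤ =>
      ‖Vdstft lam (gA lam A) (gA lam A) ((ab.1 : ZMod lam)) ((ab.2 : ZMod lam))‖ ^ 2 *
        Real.exp (-π * ((ab.1 : ℝ) ^ 2 + (ab.2 : ℝ) ^ 2) / (lam : ℝ))) := by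
    refine Summable.of_nonneg_of_le (fun ab => by positivity) (fun ab => ?_)
      (hprod.mul_left ((lam:ℝ)^2))
    have h1 := Vdstft_norm_le lam A (by omega) ((ab.1 : ZMod lam)) ((ab.2 : ZMod lam))
    have h2 : ‖Vdstft lam (gA lam A) (gA lam A) ((ab.1 : ZMod lam)) ((ab.2 : ZMod lam))‖^2
        ≤ (lam:ℝ)^2 := by nlinarith [norm_nonneg (Vdstft lam (gA lam A) (gA lam A) ((ab.1 : ZMod lam)) ((ab.2 : ZMod lam)))]
    have h3 : Real.exp (-π * ((ab.1 : ℝ) ^ 2 + (ab.2 : ℝ) ^ 2) / (lam : ℝ))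
        = Real.exp (-π*(ab.1:ℝ)^2/(lam:ℝ)) * Real.exp (-π*(ab.2:ℝ)^2/(lam:ℝ)) := by
      rw [← Real.exp_add]; congr 1; ring
    rw [h3]
    exact mul_le_mul_of_nonneg_right h2 (by positivity)
  set S : Finset (ℤ×ℤ) := (Finset.Icc (-(A:ℤ)) A) ×ˢ (Finset.Icc (-(M:ℤ)) M) with hS
  have hsub : ∑ ab ∈ S, (‖Vdstft lam (gA lam A) (gA lam A) ((ab.1 : ZMod lam)) ((ab.2 : ZMod lam))‖ ^ 2 *
        Real.exp (-π * ((ab.1 : ℝ) ^ 2 + (ab.2 : ℝ) ^ 2) / (lam : ℝ)))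
      ≤ ∑' ab : ℤ × ℤ, (‖Vdstft lam (gA lam A) (gA lam A) ((ab.1 : ZMod lam)) ((ab.2 : ZMod lam))‖ ^ 2 *
        Real.exp (-π * ((ab.1 : ℝ) ^ 2 + (ab.2 : ℝ) ^ 2) / (lam : ℝ))) :=
    Summable.sum_le_tsum S (fun ab _ => by positivity) hsummable
  have hlow : ∀ ab ∈ S, (2*(((2*A+1 - ab.1.natAbs : ℕ)):ℝ)/π)^2 * w
      ≤ ‖Vdstft lam (gA lam A) (gA lam A) ((ab.1 : ZMod lam)) ((ab.2 : ZMod lam))‖ ^ 2 *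
        Real.exp (-π * ((ab.1 : ℝ) ^ 2 + (ab.2 : ℝ) ^ 2) / (lam : ℝ)) := by
    rintro ⟨a,b⟩ hab
    rw [hS, Finset.mem_product, Finset.mem_Icc, Finset.mem_Icc] at hab
    obtain ⟨⟨ha1, ha2⟩, hb1, hb2⟩ := hab
    have haA : |a| ≤ (A:ℤ) := abs_le.mpr ⟨ha1, ha2⟩
    have hbM : |b| ≤ (M:ℤ) := abs_le.mpr ⟨hb1, hb2⟩
    have hbcond : 2 * |b| * (2*(A:ℤ)+1) ≤ (lam:ℤ) := by
      have hM1' : ((2*(2*A+1)*M : ℕ) : ℤ) ≤ (lam:ℤ) := by exact_mod_cast hM1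
      have h5 := mul_le_mul_of_nonneg_right hbM (by positivity : (0:ℤ) ≤ 2*(2*(A:ℤ)+1))
      push_cast at hM1'
      nlinarith [h5, hM1']
    have hnorm := Vdstft_norm_lower lam A hA h8 a b haA hbcond
    have hwt := weight_lower lam A M hA h8 hM4 a b haA hbM
    have hnn : (0:ℝ) ≤ 2*((2*A+1 - a.natAbs : ℕ):ℝ)/π := by positivity
    exact mul_le_mul (pow_le_pow_left₀ hnn hnorm 2) hwt hwpos.le (by positivity)
  have hsum2 := Finset.sum_le_sum hlow
  have hcardM : (Finset.Icc (-(M:ℤ)) M).card = 2*M+1 := by rw [Int.card_Icc]; omega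
  have hL2 : ∑ ab ∈ S, (2*(((2*A+1 - ab.1.natAbs : ℕ)):ℝ)/π)^2 * w
      = (2*(M:ℝ)+1) * ∑ a ∈ Finset.Icc (-(A:ℤ)) A, (2*(((2*A+1 - a.natAbs : ℕ)):ℝ)/π)^2 * w := by
    rw [hS, Finset.sum_product]
    simp only [Finset.sum_const, hcardM, nsmul_eq_mul]
    rw [Finset.mul_sum]
    refine Finset.sum_congr rfl fun a _ => ?_
    push_cast
    ring
  have hcastL : ∀ a ∈ Finset.Icc (-(A:ℤ)) A,
      (((2*A+1 - a.natAbs : ℕ)):ℝ) = (((2*(A:ℤ)+1 - |a| : ℤ)):ℝ) := by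
    intro a haa
    rw [Finset.mem_Icc] at haa
    have h1 := Int.abs_eq_natAbs a
    have h2 : ((2*A+1 - a.natAbs : ℕ):ℤ) = 2*(A:ℤ)+1 - |a| := by omega
    exact_mod_cast congrArg (Int.cast : ℤ → ℝ) h2
  have hsum3 : ∑ a ∈ Finset.Icc (-(A:ℤ)) A, (2*(((2*A+1 - a.natAbs : ℕ)):ℝ)/π)^2 * w
      = (4*w/π^2) * (((∑ a ∈ Finset.Icc (-(A:ℤ)) A, ((2*A+1 : ℤ) - |a|)^2 : ℤ)) : ℝ) := by
    push_cast
    rw [Finset.mul_sum]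
    refine Finset.sum_congr rfl fun a haa => ?_
    rw [hcastL a haa]
    push_cast
    ring
  have hSig : ((2*(A:ℝ)+1) * (2*(A:ℝ)^2+2*(A:ℝ)+1))
      ≤ (((∑ a ∈ Finset.Icc (-(A:ℤ)) A, ((2*A+1 : ℤ) - |a|)^2 : ℤ)) : ℝ) := by
    exact_mod_cast sum_L_sq A hA
  have hMM : (lam:ℝ) - 2*(A:ℝ) ≤ (2*(A:ℝ)+1)*(2*(M:ℝ)+1) := by
    have h2R : (lam:ℝ) + 1 ≤ 2*(2*(A:ℝ)+1)*((M:ℝ)+1) := by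
      exact_mod_cast (by omega : lam + 1 ≤ 2*(2*A+1)*(M+1))
    nlinarith [h2R]
  have hA1R : (1:ℝ) ≤ (A:ℝ) := by exact_mod_cast hA
  have h8R : 8*(A:ℝ)+1 ≤ (lam:ℝ) := by exact_mod_cast (by omega : 8*A+1 ≤ lam)
  have hMnnR : (0:ℝ) ≤ (M:ℝ) := Nat.cast_nonneg M
  set Sg : ℝ := (((∑ a ∈ Finset.Icc (-(A:ℤ)) A, ((2*A+1 : ℤ) - |a|)^2 : ℤ)) : ℝ) with hSg
  have hkey : (A:ℝ)^2 * ((lam:ℝ) + 2*(A:ℝ) + 1) ≤ (2*(M:ℝ)+1) * Sg := by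
    have e3 : (A:ℝ)^2*((lam:ℝ)+2*(A:ℝ)+1) ≤ ((lam:ℝ)-2*(A:ℝ))*(2*(A:ℝ)^2+2*(A:ℝ)+1) := by
      nlinarith [hA1R, h8R]
    have e1 : ((lam:ℝ)-2*(A:ℝ))*(2*(A:ℝ)^2+2*(A:ℝ)+1)
        ≤ ((2*(A:ℝ)+1)*(2*(M:ℝ)+1))*(2*(A:ℝ)^2+2*(A:ℝ)+1) :=
      mul_le_mul_of_nonneg_right hMM (by positivity)
    have e2 : ((2*(A:ℝ)+1)*(2*(M:ℝ)+1))*(2*(A:ℝ)^2+2*(A:ℝ)+1) ≤ (2*(M:ℝ)+1)*Sg := by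
      have h6 := mul_le_mul_of_nonneg_left hSig (by positivity : (0:ℝ) ≤ 2*(M:ℝ)+1)
      nlinarith [h6]
    linarith
  calc w * (2 * (A:ℝ) / π) ^ 2 * ((lam : ℝ) + 2 * (A:ℝ) + 1)
      = (4*w/π^2) * ((A:ℝ)^2 * ((lam:ℝ) + 2*(A:ℝ) + 1)) := by field_simp; ring
    _ ≤ (4*w/π^2) * ((2*(M:ℝ)+1) * Sg) :=
        mul_le_mul_of_nonneg_left hkey (by positivity)
    _ = (2*(M:ℝ)+1) * ((4*w/π^2) * Sg) := by ring
    _ = (2*(M:ℝ)+1) * (∑ a ∈ Finset.Icc (-(A:ℤ)) A, (2*(((2*A+1 - a.natAbs : ℕ)):ℝ)/π)^2 * w) := by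
        rw [hsum3]
    _ = ∑ ab ∈ S, (2*(((2*A+1 - ab.1.natAbs : ℕ)):ℝ)/π)^2 * w := hL2.symm
    _ ≤ _ := le_trans hsum2 hsub


/-- For `1 ≤ A` and `8A < λ`, the indicator `g = 1_{[-A,A]}` on `ℤ/λℤ` satisfies
(i) `‖g‖²_{ℓ²} = 2A+1`, and (ii) the weighted sum of `|V_g g|²` against
`e^{-π(a²+b²)/λ} = |𝓛₀(π(a²+b²)/λ)|²` is at least
`e^{-πA²/λ} e^{-πλ/A²} (2A/π)² (λ + 2A + 1)`. -/
theorem dstft_indicator_lower_bound (lam A : ℕ) (hA : 1 ≤ A) (h8 : 8 * A < lam) :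
    (∑' q : ZMod lam,
        ‖(if ∃ k : ℤ, |k| ≤ (A : ℤ) ∧ (k : ZMod lam) = q then (1 : ℂ) else 0)‖ ^ 2)
      = 2 * (A : ℝ) + 1 ∧
    Real.exp (-π * (A : ℝ) ^ 2 / (lam : ℝ)) * Real.exp (-π * (lam : ℝ) / (A : ℝ) ^ 2) *
        (2 * (A : ℝ) / π) ^ 2 * ((lam : ℝ) + 2 * (A : ℝ) + 1)
      ≤ ∑' ab : ℤ × ℤ,
          ‖Vdstft lam
              (fun q => if ∃ k : ℤ, |k| ≤ (A : ℤ) ∧ (k : ZMod lam) = q then (1 : ℂ) else 0)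
              (fun q => if ∃ k : ℤ, |k| ≤ (A : ℤ) ∧ (k : ZMod lam) = q then (1 : ℂ) else 0)
              ((ab.1 : ZMod lam)) ((ab.2 : ZMod lam))‖ ^ 2 *
            Real.exp (-π * ((ab.1 : ℝ) ^ 2 + (ab.2 : ℝ) ^ 2) / (lam : ℝ)) :=
  ⟨part_one lam A hA h8, part_two lam A hA h8⟩
end

section
/- (Dirichlet-kernel lower bound.) Let λ, A ∈ ℕ with A ≥ 1 and 8A < λ, and let a, b ∈ ℤ satisfy |a| ≤ A and |b| ≤ λ/(2(2A+1)). Then the geometric sum satisfies |∑_{j=0}^{2A−|a|} e^{−2πibj/λ}| ≥ 2A/π. -/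
open Real Complex

lemma abs_exp_I_sub_one (θ : ℝ) :
    ‖Complex.exp ((θ : ℂ) * Complex.I) - 1‖ = 2 * |Real.sin (θ / 2)| := by
  have h1 : Complex.exp ((θ : ℂ) * Complex.I) - 1
      = ((Real.cos θ - 1 : ℝ) : ℂ) + ((Real.sin θ : ℝ) : ℂ) * Complex.I := by
    rw [Complex.exp_mul_I, ← Complex.ofReal_cos, ← Complex.ofReal_sin]
    push_cast
    ring
  rw [h1, Complex.norm_def, Complex.normSq_add_mul_I, Real.abs_sin_half]
  rw [show ((Real.cos θ - 1) ^ 2 + Real.sin θ ^ 2) = 4 * ((1 - Real.cos θ) / 2) by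
    nlinarith [Real.sin_sq_add_cos_sq θ]]
  rw [Real.sqrt_mul (by norm_num : (0:ℝ) ≤ 4),
    show (4:ℝ) = 2^2 by norm_num, Real.sqrt_sq (by norm_num : (0:ℝ) ≤ 2)]

/-- **Dirichlet-kernel lower bound**: for `1 ≤ A`, `8A < λ`, `|a| ≤ A` and
`|b| ≤ λ/(2(2A+1))`, the geometric sum satisfies
`|∑_{j=0}^{2A-|a|} e^{-2πibj/λ}| ≥ 2A/π`. -/
theorem dirichlet_kernel_lower_bound (lam A : ℕ) (hA : 1 ≤ A) (h8 : 8 * A < lam)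
    (a b : ℤ) (ha : |a| ≤ (A : ℤ))
    (hb : |(b : ℝ)| ≤ (lam : ℝ) / (2 * (2 * (A : ℝ) + 1))) :
    2 * (A : ℝ) / π ≤
      ‖∑ j ∈ Finset.range (2 * A - a.natAbs + 1),
        Complex.exp (-(2 * (π : ℂ) * Complex.I * (b : ℂ) * (j : ℂ)) / (lam : ℂ))‖ := by
  set N : ℕ := 2 * A - a.natAbs + 1 with hN
  have hlam : 0 < lam := by omega
  have hL : (0:ℝ) < (lam:ℝ) := by exact_mod_cast hlam
  have hLC : (lam : ℂ) ≠ 0 := by exact_mod_cast hlam.ne'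
  have hnatAbs : a.natAbs ≤ A := by
    have := ha; rw [Int.abs_eq_natAbs] at this; exact_mod_cast this
  have hNge : A + 1 ≤ N := by omega
  have hNle : N ≤ 2 * A + 1 := by omega
  have hNgeR : (A:ℝ) + 1 ≤ (N:ℝ) := by exact_mod_cast hNge
  have hNleR : (N:ℝ) ≤ 2 * (A:ℝ) + 1 := by exact_mod_cast hNle
  have hNpos : (0:ℝ) < N := by positivity
  have hAR : (1:ℝ) ≤ (A:ℝ) := by exact_mod_cast hA
  by_cases hb0 : b = 0
  · subst hb0
    have : ∀ j ∈ Finset.range N,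
        Complex.exp (-(2 * (π : ℂ) * Complex.I * ((0:ℤ) : ℂ) * (j : ℂ)) / (lam : ℂ)) = 1 := by
      intro j _; norm_num
    rw [Finset.sum_congr rfl this, Finset.sum_const, Finset.card_range, nsmul_eq_mul, mul_one]
    rw [Complex.norm_natCast]
    have h2pi : 2 ≤ π := by linarith [Real.pi_gt_three]
    rw [div_le_iff₀ Real.pi_pos]
    have h1 : 2 * (N:ℝ) ≤ π * (N:ℝ) :=
      mul_le_mul_of_nonneg_right h2pi (le_of_lt hNpos)
    nlinarith
  · -- b ≠ 0
    set x : ℝ := π * (b:ℝ) / (lam:ℝ) with hx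
    have hbne : (b:ℝ) ≠ 0 := by exact_mod_cast hb0
    have hb1 : (1:ℝ) ≤ |(b:ℝ)| := by
      have : (1:ℤ) ≤ |b| := Int.one_le_abs hb0
      exact_mod_cast this
    have hxabs : |x| = π * |(b:ℝ)| / (lam:ℝ) := by
      rw [hx, abs_div, abs_mul, abs_of_pos Real.pi_pos, abs_of_pos hL]
    have hxpos : 0 < |x| := by
      rw [hxabs]; positivity
    have hblam : |(b:ℝ)| * (2 * (2 * (A:ℝ) + 1)) ≤ (lam:ℝ) :=
      (le_div_iff₀ (by positivity)).mp hb
    have hxle : |x| ≤ π / (2 * (2 * (A:ℝ) + 1)) := by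
      rw [hxabs, div_le_div_iff₀ hL (by positivity)]
      nlinarith [Real.pi_pos]
    have hxhalf : |x| ≤ π / 2 := by
      have h2 : π / (2 * (2 * (A:ℝ) + 1)) ≤ π / 2 := by
        rw [div_le_div_iff₀ (by positivity) two_pos]
        nlinarith [Real.pi_pos]
      linarith
    have hxle2 : |x| * (2 * (2 * (A:ℝ) + 1)) ≤ π :=
      (le_div_iff₀ (by positivity)).mp hxle
    have hNx : |(N:ℝ) * x| ≤ π / 2 := by
      rw [abs_mul, abs_of_pos hNpos]
      nlinarith [mul_le_mul_of_nonneg_right hNleR hxpos.le]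
    set z : ℂ := Complex.exp (((-2 * x : ℝ) : ℂ) * Complex.I) with hz
    have hxC : ((-2 * x : ℝ) : ℂ) = -(2 * (π:ℂ) * (b:ℂ)) / (lam:ℂ) := by
      rw [hx]; push_cast; ring
    have hterm : ∀ j ∈ Finset.range N,
        Complex.exp (-(2 * (π : ℂ) * Complex.I * (b : ℂ) * (j : ℂ)) / (lam : ℂ)) = z ^ j := by
      intro j _
      rw [hz, ← Complex.exp_nat_mul, hxC]
      congr 1
      push_cast
      ring
    rw [Finset.sum_congr rfl hterm]
    have hzabs : ‖z - 1‖ = 2 * |Real.sin x| := by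
      rw [hz, abs_exp_I_sub_one]
      rw [show (-2 * x) / 2 = -x by ring, Real.sin_neg, abs_neg]
    have hsinx : 0 < |Real.sin x| := by
      have h1 := Real.mul_abs_le_abs_sin hxhalf
      have h0 : 0 < 2 / π * |x| := by positivity
      linarith
    have hz1 : z ≠ 1 := by
      intro h
      rw [h] at hzabs
      simp at hzabs
      rw [hzabs] at hsinx
      simp at hsinx
    rw [geom_sum_eq hz1, norm_div, hzabs]
    have hzN : z ^ N = Complex.exp (((-2 * ((N:ℝ) * x) : ℝ) : ℂ) * Complex.I) := by
      rw [hz, ← Complex.exp_nat_mul]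
      congr 1
      push_cast
      ring
    have hzNabs : ‖z ^ N - 1‖ = 2 * |Real.sin ((N:ℝ) * x)| := by
      rw [hzN, abs_exp_I_sub_one]
      rw [show (-2 * ((N:ℝ) * x)) / 2 = -((N:ℝ) * x) by ring, Real.sin_neg, abs_neg]
    rw [hzNabs]
    have hnum : 2 / π * ((N:ℝ) * |x|) ≤ |Real.sin ((N:ℝ) * x)| := by
      have := Real.mul_abs_le_abs_sin hNx
      rwa [abs_mul, abs_of_pos hNpos] at this
    have hden : |Real.sin x| ≤ |x| := Real.abs_sin_le_abs
    calc 2 * (A:ℝ) / π ≤ 2 * (N:ℝ) / π := by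
          gcongr
          linarith
      _ = (2 * (2 / π * ((N:ℝ) * |x|))) / (2 * |x|) := by
          field_simp
      _ ≤ (2 * |Real.sin ((N:ℝ) * x)|) / (2 * |Real.sin x|) := by
          apply div_le_div₀ (by positivity) (by linarith) (by positivity)
          linarith
end
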